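/- Let Σ be a finite alphabet and p : Σ → Σ* a com-injective word substitution. Encode words w = a₁…aₙ ∈ Σ* as polynomials in ℚ[{x̃_a}_{a∈Σ} ∪ {x̄_a}_{a∈Σ}] by bar(w) := ∏ᵢ x̄_{aᵢ} and tilde(ε) := 0, tilde(a·w) := x̃_a·bar(w) + tilde(w). Let φ_p be the ℚ-algebra endomorphism of ℚ[{x̃_a}_{a∈Σ} ∪ {x̄_a}_{a∈Σ}] determined by x̃_a ↦ tilde(p(a)) and x̄_a ↦ bar(p(a)). Then φ_p is injective. -/

import Mathlib

open MvPolynomial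
set_option maxHeartbeats 2000000
set_option synthInstance.maxHeartbeats 400000

/-- bar(w) = ∏ᵢ x̄_{wᵢ}; bar variables are indexed by `Sum.inr`. -/
noncomputable def barE {A : Type*} (w : List A) : MvPolynomial (A ⊕ A) ℚ :=
  (w.map fun a => (X (Sum.inr a) : MvPolynomial (A ⊕ A) ℚ)).prod

/-- tilde(ε) = 0, tilde(a·w) = x̃_a · bar(w) + tilde(w); tilde variables are
indexed by `Sum.inl`. -/
noncomputable def tildeE {A : Type*} : List A → MvPolynomial (A ⊕ A) ℚ
  | [] => 0
  | a :: w => X (Sum.inl a) * barE w + tildeE w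

/-! ### Generic auxiliary material -/

section Gen
variable {A : Type*} [DecidableEq A]

/-- generic "row vector" of a word: row [] = 0, row (c::v) = row v + e_c * β(v). -/
def rowGen {G : Type*} [AddCommMonoid G] (β : List A → G) : List A → A → G
  | [] => fun _ => 0
  | c :: v => fun b => rowGen β v b + if b = c then β v else 0

lemma rowGen_nil {G : Type*} [AddCommMonoid G] (β : List A → G) (b : A) :
    rowGen β [] b = 0 := rfl

lemma rowGen_cons {G : Type*} [AddCommMonoid G] (β : List A → G) (c : A) (v : List A) (b : A) :
    rowGen β (c :: v) b = rowGen β v b + if b = c then β v else 0 := rfl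

lemma rowGen_map {G G' : Type*} [AddCommMonoid G] [AddCommMonoid G'] (η : G →+ G')
    (β : List A → G) (v : List A) (b : A) :
    η (rowGen β v b) = rowGen (fun w => η (β w)) v b := by
  induction v with
  | nil => simp [rowGen_nil]
  | cons c v ih => simp [rowGen_cons, ih, apply_ite η]

lemma rowGen_one (v : List A) (b : A) : rowGen (fun _ => (1 : ℚ)) v b = v.count b := by
  induction v with
  | nil => simp [rowGen_nil]
  | cons c v ih =>
      rw [rowGen_cons, ih, List.count_cons]
      push_cast
      simp only [beq_iff_eq]
      exact congrArg _ (if_congr eq_comm rfl rfl)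

variable [Fintype A]

/-- generic Laurent monomial in a commutative group -/
def monGen {G : Type*} [CommGroup G] (uX : A → G) (z : A → ℤ) : G := ∏ a, uX a ^ z a

lemma monGen_add {G : Type*} [CommGroup G] (uX : A → G) (z z' : A → ℤ) :
    monGen uX (z + z') = monGen uX z * monGen uX z' := by
  simp [monGen, zpow_add, Finset.prod_mul_distrib]

lemma monGen_map {G G' : Type*} [CommGroup G] [CommGroup G'] (φ : G →* G') (uX : A → G)
    (z : A → ℤ) : φ (monGen uX z) = monGen (fun a => φ (uX a)) z := by
  simp [monGen, map_prod, map_zpow]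

lemma monGen_single {G : Type*} [CommGroup G] (uX : A → G) (a : A) (n : ℤ) :
    monGen uX (fun c => if c = a then n else 0) = uX a ^ n := by
  rw [monGen,
    Finset.prod_congr rfl (fun c _ => by
      rw [show (uX c ^ if c = a then n else 0) = if c = a then uX c ^ n else 1 from by
        split <;> simp])]
  simp [Finset.prod_ite_eq' Finset.univ a (fun c => uX c ^ n)]

lemma wordProd_eq {G : Type*} [CommGroup G] (uX : A → G) (zC : A → A → ℤ) (v : List A) :
    (v.map fun c => monGen uX (zC c)).prod
      = monGen uX (fun c' => ∑ b, (v.count b : ℤ) * zC b c') := by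
  induction v with
  | nil => simp [monGen]
  | cons c v ih =>
      rw [List.map_cons, List.prod_cons, ih, ← monGen_add]
      congr 1
      funext c'
      simp only [Pi.add_apply, List.count_cons, beq_iff_eq]
      push_cast
      rw [Finset.sum_congr rfl
        (fun b _ => (by split <;> ring :
          ((v.count b : ℤ) + if c = b then 1 else 0) * zC b c'
            = ((if c = b then zC b c' else 0) + (v.count b : ℤ) * zC b c'))),
        Finset.sum_add_distrib, Finset.sum_ite_eq Finset.univ c (fun b => zC b c')]
      simp [add_comm]
end Gen

/-! ### Rational/matrix auxiliary material -/

lemma rat_clear (q : ℚ) (n : ℕ) (h : q.den ∣ n) :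
    ((q.num * ((n / q.den : ℕ) : ℤ) : ℤ) : ℚ) = q * n := by
  obtain ⟨k, hk⟩ := h
  rw [hk, Nat.mul_div_cancel_left _ q.pos]
  push_cast
  rw [← mul_assoc, Rat.mul_den_eq_num]

section Mat
variable {A : Type*} [Fintype A] [DecidableEq A]

lemma nat_inj_of_hp (p : A → List A)
    (hp : Function.Injective (fun m : Multiset A => m.bind fun a => (↑(p a) : Multiset A)))
    (s t : A → ℕ) (h : ∀ b, ∑ a, s a * (p a).count b = ∑ a, t a * (p a).count b) :
    s = t := by
  let bindHom : Multiset A →+ Multiset A :=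
    { toFun := fun m => m.bind fun a => (↑(p a) : Multiset A)
      map_zero' := Multiset.zero_bind _
      map_add' := fun x y => Multiset.add_bind x y _ }
  have key : ∀ (s : A → ℕ) (b : A),
      Multiset.count b (bindHom (∑ a, s a • ({a} : Multiset A)))
        = ∑ a, s a * (p a).count b := by
    intro s b
    rw [map_sum]
    rw [Multiset.count_sum']
    refine Finset.sum_congr rfl fun a _ => ?_
    simp only [bindHom, AddMonoidHom.coe_mk, ZeroHom.coe_mk]
    rw [show (s a • ({a} : Multiset A)).bind (fun a => (↑(p a) : Multiset A))
        = s a • ((↑(p a)) : Multiset A) from ?_]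
    · rw [Multiset.count_nsmul, Multiset.coe_count]
    · induction (s a) with
      | zero => simp
      | succ n ih => simp [succ_nsmul, Multiset.add_bind, ih]
  have hms : (∑ a, s a • ({a} : Multiset A)) = (∑ a, t a • ({a} : Multiset A)) := by
    apply hp
    have : ∀ (u : A → ℕ), (fun m : Multiset A => m.bind fun a => (↑(p a) : Multiset A))
        (∑ a, u a • ({a} : Multiset A)) = bindHom (∑ a, u a • ({a} : Multiset A)) := by
      intro u; rfl
    rw [this s, this t]
    ext b
    rw [key s b, key t b, h b]
  funext a
  have := congrArg (Multiset.count a) hms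
  rw [Multiset.count_sum', Multiset.count_sum'] at this
  simpa [Multiset.count_nsmul, Multiset.count_singleton, mul_ite, Finset.sum_ite_eq]
    using this

lemma count_det_ne_zero (p : A → List A)
    (hp : Function.Injective (fun m : Multiset A => m.bind fun a => (↑(p a) : Multiset A))) :
    (Matrix.of fun b a : A => ((p a).count b : ℚ)).det ≠ 0 := by
  intro hdet
  obtain ⟨v, hv0, hv⟩ := (Matrix.exists_mulVec_eq_zero_iff).2 hdet
  set d : ℕ := ∏ a, (v a).den with hd
  have hdpos : 0 < d := Finset.prod_pos (fun a _ => (v a).pos)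
  set q : A → ℤ := fun a => (v a).num * ((d / (v a).den : ℕ) : ℤ) with hq
  have hint : ∀ a, ((q a : ℤ) : ℚ) = v a * d := fun a =>
    rat_clear (v a) d (Finset.dvd_prod_of_mem _ (Finset.mem_univ a))
  set s : A → ℕ := fun a => (q a).toNat with hs
  set t : A → ℕ := fun a => (-q a).toNat with ht
  have hst : ∀ a, ((s a : ℤ) : ℚ) - ((t a : ℤ) : ℚ) = (q a : ℚ) := by
    intro a
    rw [← Int.cast_sub, Int.toNat_sub_toNat_neg (q a)]
  have hrow : ∀ b, (((∑ a, s a * (p a).count b : ℕ) : ℚ)) = ((∑ a, t a * (p a).count b : ℕ) : ℚ) := by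
    intro b
    have h0 : ∑ a, ((p a).count b : ℚ) * v a = 0 := by
      have := congrFun hv b
      simpa [Matrix.mulVec, dotProduct] using this
    have h1 : ∑ a, ((p a).count b : ℚ) * (q a : ℚ) = 0 := by
      have : ∑ a, ((p a).count b : ℚ) * (v a * d) = (∑ a, ((p a).count b : ℚ) * v a) * d := by
        rw [Finset.sum_mul]; exact Finset.sum_congr rfl fun a _ => by ring
      rw [Finset.sum_congr rfl fun a _ => by rw [hint a], this, h0, zero_mul]
    push_cast
    have h2 : ∑ a, ((s a : ℚ) - (t a : ℚ)) * ((p a).count b : ℚ) = 0 := by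
      rw [Finset.sum_congr rfl fun a _ => by
        rw [show ((s a : ℚ) - (t a : ℚ)) = (q a : ℚ) from by exact_mod_cast hst a]]
      rw [← h1]
      exact Finset.sum_congr rfl fun a _ => by ring
    have h3 : ∑ a, (s a : ℚ) * ((p a).count b : ℚ) - ∑ a, (t a : ℚ) * ((p a).count b : ℚ) = 0 := by
      rw [← Finset.sum_sub_distrib, ← h2]
      exact Finset.sum_congr rfl fun a _ => by ring
    linarith [h3]
  have hstn : s = t := by
    apply nat_inj_of_hp p hp
    intro b
    exact_mod_cast hrow b
  apply hv0
  funext a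
  have hq0 : q a = 0 := by
    have := congrFun hstn a
    simp only [hs, ht] at this
    omega
  have := hint a
  rw [hq0] at this
  have hvd : v a * d = 0 := by exact_mod_cast this.symm
  rcases mul_eq_zero.1 hvd with h | h
  · exact h
  · exact absurd h (by positivity)

lemma exists_right_inverse (M : Matrix A A ℚ) (hM : M.det ≠ 0) :
    ∃ (N : ℕ) (zC : A → A → ℤ), 0 < N ∧
      ∀ a c, ∑ b, M b a * ((zC b c : ℤ) : ℚ) = if c = a then (N : ℚ) else 0 := by
  set G := (M.transpose)⁻¹ with hG
  have hdet : IsUnit (M.transpose).det := by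
    rw [Matrix.det_transpose]; exact isUnit_iff_ne_zero.2 hM
  have hGM : M.transpose * G = 1 := Matrix.mul_nonsing_inv _ hdet
  set N : ℕ := ∏ x : A × A, (G x.1 x.2).den with hN
  have hNpos : 0 < N := Finset.prod_pos (fun x _ => (G x.1 x.2).pos)
  refine ⟨N, fun b c => (G b c).num * ((N / (G b c).den : ℕ) : ℤ), hNpos, ?_⟩
  intro a c
  have hcast : ∀ b, (((G b c).num * ((N / (G b c).den : ℕ) : ℤ) : ℤ) : ℚ) = G b c * N :=
    fun b => rat_clear (G b c) N (Finset.dvd_prod_of_mem (fun x : A × A => (G x.1 x.2).den)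
      (Finset.mem_univ (b, c)))
  rw [Finset.sum_congr rfl fun b _ => by rw [hcast b]]
  have : ∑ b, M b a * (G b c * N) = (∑ b, M.transpose a b * G b c) * N := by
    rw [Finset.sum_mul]
    exact Finset.sum_congr rfl fun b _ => by rw [Matrix.transpose_apply]; ring
  rw [this, show ∑ b, M.transpose a b * G b c = (M.transpose * G) a c from rfl, hGM,
    Matrix.one_apply]
  by_cases h : a = c
  · subst h; simp
  · rw [if_neg h, if_neg (fun hc => h hc.symm), zero_mul]
end Mat

/-- for a com-injective word substitution p over a finite alphabet,
the ℚ-algebra endomorphism φ_p : x̃_a ↦ tilde(p(a)), x̄_a ↦ bar(p(a)) of the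
encoding ring ℚ[{x̃_a} ∪ {x̄_a}] is injective. -/
theorem stmt_9 {A : Type*} [Fintype A] (p : A → List A)
    (hp : Function.Injective (fun m : Multiset A => m.bind fun a => (↑(p a) : Multiset A))) :
    Function.Injective
      (MvPolynomial.aeval (R := ℚ)
        (Sum.elim (fun a : A => tildeE (p a)) (fun a : A => barE (p a)))) := by
  classical
  -- Set up count matrix and an integer right-inverse
  obtain ⟨N, zC, hNpos, hzC⟩ :=
    exists_right_inverse (Matrix.of fun b a : A => ((p a).count b : ℚ)) (count_det_ne_zero p hp)
  have hkeyZ : ∀ a c, (∑ b, ((p a).count b : ℤ) * zC b c) = if c = a then (N : ℤ) else 0 := by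
    intro a c
    have h1 := hzC a c
    simp only [Matrix.of_apply] at h1
    have h2 : ((∑ b, ((p a).count b : ℤ) * zC b c : ℤ) : ℚ)
        = (((if c = a then (N : ℤ) else 0) : ℤ) : ℚ) := by
      rw [show (((if c = a then (N : ℤ) else 0) : ℤ) : ℚ) = (if c = a then (N : ℚ) else 0) from by
        split <;> simp]
      rw [← h1]
      push_cast
      rfl
    exact_mod_cast h2
  -- Localization away from the product of all (bar) variables
  set π : MvPolynomial A ℚ := ∏ a, X a with hπdef
  have hπ0 : π ≠ 0 := Finset.prod_ne_zero_iff.2 fun a _ => X_ne_zero a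
  have hεunit : IsUnit ((eval (fun _ : A => (1 : ℚ)) : MvPolynomial A ℚ →+* ℚ) π) := by
    rw [hπdef, map_prod]
    simp
  set ε : Localization.Away π →+* ℚ :=
    IsLocalization.Away.lift (g := (eval (fun _ : A => (1 : ℚ)) : MvPolynomial A ℚ →+* ℚ))
      π hεunit with hεdef
  have hπK : algebraMap (MvPolynomial A ℚ) (FractionRing (MvPolynomial A ℚ)) π ≠ 0 := by
    intro h
    exact hπ0 (IsFractionRing.injective (MvPolynomial A ℚ) (FractionRing (MvPolynomial A ℚ))
      (by rw [h, map_zero]))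
  set ξ : Localization.Away π →+* FractionRing (MvPolynomial A ℚ) :=
    IsLocalization.Away.lift
      (g := algebraMap (MvPolynomial A ℚ) (FractionRing (MvPolynomial A ℚ))) π
      (isUnit_iff_ne_zero.2 hπK) with hξdef
  have hξalg : ∀ b, ξ (algebraMap (MvPolynomial A ℚ) (Localization.Away π) b)
      = algebraMap (MvPolynomial A ℚ) (FractionRing (MvPolynomial A ℚ)) b := by
    intro b
    rw [hξdef]
    exact IsLocalization.Away.lift_eq π _ b
  have hεalg : ∀ b, ε (algebraMap (MvPolynomial A ℚ) (Localization.Away π) b)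
      = eval (fun _ : A => (1 : ℚ)) b := by
    intro b
    rw [hεdef]
    exact IsLocalization.Away.lift_eq π _ b
  have hξinj : Function.Injective ξ := by
    have h0 : ∀ x : Localization.Away π, ξ x = 0 → x = 0 := by
      intro x hx
      obtain ⟨⟨b, s⟩, hbs⟩ := IsLocalization.surj (Submonoid.powers π) x
      have h1 : ξ (algebraMap _ (Localization.Away π) b) = 0 := by
        rw [← hbs, map_mul, hx, zero_mul]
      rw [hξalg] at h1
      have hb : b = 0 := IsFractionRing.injective _ _ (by rw [h1, map_zero])
      have hu := IsLocalization.map_units (Localization.Away π) s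
      rw [hb, map_zero] at hbs
      exact (hu.mul_left_eq_zero).1 hbs
    intro x y h
    have : ξ (x - y) = 0 := by rw [map_sub, h, sub_self]
    exact sub_eq_zero.1 (h0 _ this)
  -- units for the bar variables in the localization
  set uX : A → (Localization.Away π)ˣ := fun a =>
    (IsLocalization.Away.isUnit_of_dvd (S := Localization.Away π) (x := π)
      (Finset.dvd_prod_of_mem (fun a : A => (X a : MvPolynomial A ℚ))
        (Finset.mem_univ a))).unit with huXdef
  have huXval : ∀ a, ((uX a : (Localization.Away π)ˣ) : Localization.Away π)
      = algebraMap (MvPolynomial A ℚ) (Localization.Away π) (X a) := by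
    intro a
    rw [huXdef]
    exact IsUnit.unit_spec _
  set βL : List A → (Localization.Away π)ˣ :=
    fun v => (v.map fun c => monGen uX (zC c)).prod with hβLdef
  set bval : List A → Localization.Away π :=
    fun v => ((βL v : (Localization.Away π)ˣ) : Localization.Away π) with hbvaldef
  have hβNa : ∀ a, βL (p a) = uX a ^ (N : ℤ) := by
    intro a
    simp only [hβLdef]
    rw [wordProd_eq uX zC (p a)]
    rw [show (fun c' => ∑ b, (((p a).count b : ℤ)) * zC b c')
        = fun c' => if c' = a then (N : ℤ) else 0 from funext fun c => hkeyZ a c]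
    exact monGen_single uX a (N : ℤ)
  -- evaluation-at-one of all the Laurent monomials is 1
  have hεuX : ∀ a, Units.map ε.toMonoidHom (uX a) = 1 := by
    intro a
    ext
    rw [Units.coe_map]
    show ε ((uX a : Localization.Away π)) = ((1 : ℚˣ) : ℚ)
    rw [huXval, hεalg]
    simp
  have hεmon : ∀ z, ε ((monGen uX z : (Localization.Away π)ˣ) : Localization.Away π) = 1 := by
    intro z
    have h1 : ε ((monGen uX z : (Localization.Away π)ˣ) : Localization.Away π)
        = ((Units.map ε.toMonoidHom (monGen uX z) : ℚˣ) : ℚ) := by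
      rw [Units.coe_map]; rfl
    rw [h1, monGen_map (Units.map ε.toMonoidHom) uX z]
    rw [show (fun a => Units.map ε.toMonoidHom (uX a)) = fun _ : A => (1 : ℚˣ) from
      funext hεuX]
    simp [monGen]
  have hεβ : ∀ v, ε (bval v) = 1 := by
    intro v
    simp only [hbvaldef, hβLdef]
    have h1 : (((v.map fun c => monGen uX (zC c)).prod : (Localization.Away π)ˣ)
          : Localization.Away π)
        = ((v.map fun c => ((monGen uX (zC c) : (Localization.Away π)ˣ)
            : Localization.Away π))).prod := by
      rw [← Units.coeHom_apply, map_list_prod, List.map_map]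
      rfl
    rw [h1, map_list_prod, List.map_map]
    rw [show (⇑ε ∘ fun c => ((monGen uX (zC c) : (Localization.Away π)ˣ)
        : Localization.Away π)) = fun _ : A => (1 : ℚ) from funext fun c => hεmon (zC c)]
    simp
  have hεrow : ∀ v b, ε (rowGen bval v b) = (v.count b : ℚ) := by
    intro v b
    have h1 : ε (rowGen bval v b) = rowGen (fun w => ε (bval w)) v b :=
      rowGen_map (AddMonoidHom.mk' ε (map_add ε)) bval v b
    rw [h1, show (fun w => ε (bval w)) = fun _ : List A => (1 : ℚ) from funext hεβ, rowGen_one]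
  -- the matrix τ over the fraction field, and its determinant
  set τ : Matrix A A (FractionRing (MvPolynomial A ℚ)) :=
    Matrix.of fun a b => ξ (rowGen bval (p a) b) with hτdef
  have hτdet : τ.det ≠ 0 := by
    intro h
    have h1 : ξ ((Matrix.of fun a b => rowGen bval (p a) b).det) = 0 := by
      rw [RingHom.map_det]
      rw [show ξ.mapMatrix (Matrix.of fun a b => rowGen bval (p a) b) = τ from rfl]
      exact h
    have h2 : (Matrix.of fun a b => rowGen bval (p a) b).det = 0 :=
      hξinj (by rw [h1, map_zero])
    have h4 : ε.mapMatrix (Matrix.of fun a b => rowGen bval (p a) b)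
        = (Matrix.of fun b a : A => ((p a).count b : ℚ)).transpose := by
      ext a b
      simp only [RingHom.mapMatrix_apply, Matrix.map_apply, Matrix.of_apply,
        Matrix.transpose_apply]
      exact hεrow (p a) b
    have h3 : (Matrix.of fun b a : A => ((p a).count b : ℚ)).det = 0 := by
      rw [← Matrix.det_transpose, ← h4, ← RingHom.map_det, h2, map_zero]
    exact count_det_ne_zero p hp h3
  have hτunit : IsUnit τ.det := isUnit_iff_ne_zero.2 hτdet
  -- the invertible linear substitution Λ
  set Λ : MvPolynomial A (FractionRing (MvPolynomial A ℚ))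
      →ₐ[FractionRing (MvPolynomial A ℚ)] MvPolynomial A (FractionRing (MvPolynomial A ℚ)) :=
    aeval (fun a => ∑ b, C (τ a b) * X b) with hΛdef
  set Λ' : MvPolynomial A (FractionRing (MvPolynomial A ℚ))
      →ₐ[FractionRing (MvPolynomial A ℚ)] MvPolynomial A (FractionRing (MvPolynomial A ℚ)) :=
    aeval (fun a => ∑ b, C (τ⁻¹ a b) * X b) with hΛ'def
  have hΛid : ∀ f, Λ' (Λ f) = f := by
    have hcomp : Λ'.comp Λ = AlgHom.id _ _ := by
      apply algHom_ext
      intro a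
      rw [AlgHom.comp_apply, AlgHom.id_apply, hΛdef, aeval_X, map_sum]
      have hterm : ∀ b, Λ' (C (τ a b) * X b) = ∑ c, C (τ a b * τ⁻¹ b c) * X c := by
        intro b
        rw [map_mul, hΛ'def, aeval_C, aeval_X, algebraMap_eq, Finset.mul_sum]
        exact Finset.sum_congr rfl fun c _ => by rw [← mul_assoc, ← C_mul]
      rw [Finset.sum_congr rfl fun b _ => hterm b, Finset.sum_comm]
      have h5 : ∀ c, (∑ b, (C (τ a b * τ⁻¹ b c) : MvPolynomial A (FractionRing (MvPolynomial A ℚ))) * X c)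
          = C ((τ * τ⁻¹) a c) * X c := by
        intro c
        rw [← Finset.sum_mul, ← map_sum (C : FractionRing (MvPolynomial A ℚ) →+* _),
          Matrix.mul_apply]
      rw [Finset.sum_congr rfl fun c _ => h5 c, Matrix.mul_nonsing_inv τ hτunit]
      simp [Matrix.one_apply, apply_ite (C : FractionRing (MvPolynomial A ℚ) → _),
        ite_mul, Finset.sum_ite_eq]
    intro f
    have := congrArg (fun g : MvPolynomial A (FractionRing (MvPolynomial A ℚ))
        →ₐ[FractionRing (MvPolynomial A ℚ)] MvPolynomial A (FractionRing (MvPolynomial A ℚ)) =>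
      g f) hcomp
    simpa using this
  have hΛinj : Function.Injective ⇑Λ := fun x y h => by rw [← hΛid x, h, hΛid y]
  -- injectivity of the power substitution on the bar part
  have hNind : AlgebraicIndependent ℚ (fun a : A => (X a : MvPolynomial A ℚ) ^ N) := by
    have h := algebraicIndependent_polynomial_aeval_X (R := ℚ) (ι := A)
      (fun _ => Polynomial.X ^ N) (fun _ => (Polynomial.transcendental_X ℚ).pow hNpos)
    simpa using h
  have hpwinj : Function.Injective
      ⇑(aeval (R := ℚ) (fun a : A => (X a : MvPolynomial A ℚ) ^ N)) :=
    algebraicIndependent_iff_injective_aeval.1 hNind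
  set ρ : MvPolynomial A ℚ →+* FractionRing (MvPolynomial A ℚ) :=
    (algebraMap (MvPolynomial A ℚ) (FractionRing (MvPolynomial A ℚ))).comp
      ((aeval (R := ℚ) (fun a : A => (X a : MvPolynomial A ℚ) ^ N)) :
        MvPolynomial A ℚ →ₐ[ℚ] MvPolynomial A ℚ).toRingHom with hρdef
  have hρinj : Function.Injective ⇑ρ := by
    rw [hρdef, RingHom.coe_comp]
    exact (IsFractionRing.injective _ _).comp hpwinj
  -- the evaluation point u and the homomorphism σ
  set u : A ⊕ A → FractionRing (MvPolynomial A (FractionRing (MvPolynomial A ℚ))) :=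
    Sum.elim
      (fun a => algebraMap (MvPolynomial A (FractionRing (MvPolynomial A ℚ))) _ (X a))
      (fun b => algebraMap (MvPolynomial A (FractionRing (MvPolynomial A ℚ))) _
        (C (ξ ((monGen uX (zC b) : (Localization.Away π)ˣ) : Localization.Away π))))
    with hudef
  set cf : ℚ →+* FractionRing (MvPolynomial A (FractionRing (MvPolynomial A ℚ))) :=
    (algebraMap (MvPolynomial A (FractionRing (MvPolynomial A ℚ)))
        (FractionRing (MvPolynomial A (FractionRing (MvPolynomial A ℚ))))).comp
      ((C : (FractionRing (MvPolynomial A ℚ)) →+* MvPolynomial A (FractionRing (MvPolynomial A ℚ))).comp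
        ((algebraMap (MvPolynomial A ℚ) (FractionRing (MvPolynomial A ℚ))).comp
          (C : ℚ →+* MvPolynomial A ℚ))) with hcfdef
  set σ : MvPolynomial (A ⊕ A) ℚ →+*
      FractionRing (MvPolynomial A (FractionRing (MvPolynomial A ℚ))) :=
    eval₂Hom cf u with hσdef
  -- computation of σ on bar and tilde encodings
  have hσbar : ∀ v : List A, σ (barE v)
      = algebraMap (MvPolynomial A (FractionRing (MvPolynomial A ℚ))) _ (C (ξ (bval v))) := by
    intro v
    rw [barE, map_list_prod, List.map_map]
    have h1 : (⇑σ ∘ fun a : A => (X (Sum.inr a) : MvPolynomial (A ⊕ A) ℚ))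
        = fun c : A => algebraMap (MvPolynomial A (FractionRing (MvPolynomial A ℚ))) _
            (C (ξ ((monGen uX (zC c) : (Localization.Away π)ˣ) : Localization.Away π))) := by
      funext c
      simp only [Function.comp_apply, hσdef, eval₂Hom_X', hudef, Sum.elim_inr]
    rw [h1]
    have h2 : bval v = ((v.map fun c => ((monGen uX (zC c) : (Localization.Away π)ˣ)
        : Localization.Away π))).prod := by
      simp only [hbvaldef, hβLdef]
      rw [← Units.coeHom_apply, map_list_prod, List.map_map]
      rfl
    rw [h2]
    simp only [map_list_prod, List.map_map]
    rfl
  have hσtilde : ∀ v : List A, σ (tildeE v)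
      = algebraMap (MvPolynomial A (FractionRing (MvPolynomial A ℚ))) _
          (∑ b, C (ξ (rowGen bval v b)) * X b) := by
    intro v
    induction v with
    | nil => simp [tildeE, rowGen_nil]
    | cons c v ih =>
        rw [show tildeE (c :: v) = X (Sum.inl c) * barE v + tildeE v from rfl]
        rw [map_add, map_mul, hσbar v, ih]
        have hX : σ (X (Sum.inl c))
            = algebraMap (MvPolynomial A (FractionRing (MvPolynomial A ℚ))) _ (X c) := by
          simp only [hσdef, eval₂Hom_X', hudef, Sum.elim_inl]
        rw [hX]
        have hterm : ∀ b, (C (ξ (rowGen bval (c :: v) b))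
              : MvPolynomial A (FractionRing (MvPolynomial A ℚ))) * X b
            = C (ξ (rowGen bval v b)) * X b
              + (if b = c then C (ξ (bval v)) * X b else 0) := by
          intro b
          rw [rowGen_cons, map_add, apply_ite ξ, map_zero, map_add, apply_ite
            (C : FractionRing (MvPolynomial A ℚ) → MvPolynomial A (FractionRing (MvPolynomial A ℚ))),
            C_0, add_mul]
          congr 1
          split <;> simp
        rw [show (∑ b, (C (ξ (rowGen bval (c :: v) b))
              : MvPolynomial A (FractionRing (MvPolynomial A ℚ))) * X b)
            = (∑ b, C (ξ (rowGen bval v b)) * X b) + C (ξ (bval v)) * X c from by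
          rw [Finset.sum_congr rfl fun b _ => hterm b, Finset.sum_add_distrib,
            Finset.sum_ite_eq' Finset.univ c (fun b => C (ξ (bval v)) * X b)]
          simp]
        rw [map_add, map_mul]
        ring
  -- the two sides agree
  have hbig : σ.comp (aeval (R := ℚ)
        (Sum.elim (fun a : A => tildeE (p a)) (fun a : A => barE (p a)))).toRingHom
      = (algebraMap (MvPolynomial A (FractionRing (MvPolynomial A ℚ)))
          (FractionRing (MvPolynomial A (FractionRing (MvPolynomial A ℚ))))).comp
        ((Λ.toRingHom).comp ((MvPolynomial.map ρ).comp
          (sumAlgEquiv ℚ A A).toAlgHom.toRingHom)) := by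
    apply ringHom_ext
    · intro r
      simp only [RingHom.comp_apply, AlgHom.toRingHom_eq_coe, RingHom.coe_coe, AlgHom.coe_coe,
        AlgEquiv.toAlgHom_eq_coe, AlgEquiv.coe_algHom]
      rw [show (aeval (R := ℚ) (Sum.elim (fun a : A => tildeE (p a))
          (fun a : A => barE (p a)))) (C r) = C r from by rw [aeval_C]; rfl]
      rw [show (sumAlgEquiv ℚ A A) (C r) = C (C r) from by
        simp [sumAlgEquiv_C_inl]]
      rw [map_C, show ρ (C r) = algebraMap (MvPolynomial A ℚ) (FractionRing (MvPolynomial A ℚ))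
          (C r) from by
        rw [hρdef]
        simp only [RingHom.comp_apply, AlgHom.toRingHom_eq_coe, RingHom.coe_coe]
        rw [show (aeval (R := ℚ) (fun a : A => (X a : MvPolynomial A ℚ) ^ N)) (C r)
          = C r from by rw [aeval_C]; rfl]]
      rw [show Λ ((C (algebraMap (MvPolynomial A ℚ) (FractionRing (MvPolynomial A ℚ)) (C r)))
            : MvPolynomial A (FractionRing (MvPolynomial A ℚ)))
          = C (algebraMap (MvPolynomial A ℚ) (FractionRing (MvPolynomial A ℚ)) (C r)) from by
        rw [hΛdef, aeval_C]; rfl]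
      rw [hσdef, eval₂Hom_C, hcfdef]
      rfl
    · rintro (a | a)
      · -- tilde variables
        simp only [RingHom.comp_apply, AlgHom.toRingHom_eq_coe, RingHom.coe_coe, AlgHom.coe_coe,
        AlgEquiv.toAlgHom_eq_coe, AlgEquiv.coe_algHom]
        rw [show (aeval (R := ℚ) (Sum.elim (fun a : A => tildeE (p a))
            (fun a : A => barE (p a)))) (X (Sum.inl a)) = tildeE (p a) from by
          rw [aeval_X]; rfl]
        rw [hσtilde (p a)]
        rw [show (sumAlgEquiv ℚ A A) (X (Sum.inl a)) = X a from by
          simp [sumAlgEquiv_X_inl]]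
        rw [map_X]
        rw [show Λ (X a) = ∑ b, C (τ a b) * X b from by rw [hΛdef, aeval_X]]
        rfl
      · -- bar variables
        simp only [RingHom.comp_apply, AlgHom.toRingHom_eq_coe, RingHom.coe_coe, AlgHom.coe_coe,
        AlgEquiv.toAlgHom_eq_coe, AlgEquiv.coe_algHom]
        rw [show (aeval (R := ℚ) (Sum.elim (fun a : A => tildeE (p a))
            (fun a : A => barE (p a)))) (X (Sum.inr a)) = barE (p a) from by
          rw [aeval_X]; rfl]
        rw [hσbar (p a)]
        have hb1 : bval (p a)
            = (algebraMap (MvPolynomial A ℚ) (Localization.Away π) (X a)) ^ N := by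
          simp only [hbvaldef]
          rw [hβNa a, zpow_natCast, Units.val_pow_eq_pow_val, huXval]
        have hb2 : ξ (bval (p a))
            = (algebraMap (MvPolynomial A ℚ) (FractionRing (MvPolynomial A ℚ)) (X a)) ^ N := by
          rw [hb1, map_pow, hξalg]
        rw [hb2]
        rw [show (sumAlgEquiv ℚ A A) (X (Sum.inr a)) = C (X a) from by
          simp [sumAlgEquiv_X_inr]]
        rw [map_C, show ρ (X a) = (algebraMap (MvPolynomial A ℚ)
            (FractionRing (MvPolynomial A ℚ)) (X a)) ^ N from by
          rw [hρdef]
          simp only [RingHom.comp_apply, AlgHom.toRingHom_eq_coe, RingHom.coe_coe]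
          rw [show (aeval (R := ℚ) (fun a : A => (X a : MvPolynomial A ℚ) ^ N)) (X a)
            = (X a : MvPolynomial A ℚ) ^ N from by rw [aeval_X], map_pow]]
        rw [show Λ ((C ((algebraMap (MvPolynomial A ℚ) (FractionRing (MvPolynomial A ℚ))
              (X a)) ^ N)) : MvPolynomial A (FractionRing (MvPolynomial A ℚ)))
            = C ((algebraMap (MvPolynomial A ℚ) (FractionRing (MvPolynomial A ℚ))
              (X a)) ^ N) from by rw [hΛdef, aeval_C]; rfl]
  -- conclude
  have hend : Function.Injective ⇑(σ.comp (aeval (R := ℚ)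
      (Sum.elim (fun a : A => tildeE (p a)) (fun a : A => barE (p a)))).toRingHom) := by
    rw [hbig, RingHom.coe_comp, RingHom.coe_comp, RingHom.coe_comp]
    refine Function.Injective.comp (IsFractionRing.injective _ _) ?_
    refine Function.Injective.comp hΛinj ?_
    refine Function.Injective.comp (map_injective ρ hρinj) ?_
    exact (sumAlgEquiv ℚ A A).injective
  rw [RingHom.coe_comp] at hend
  exact Function.Injective.of_comp hend
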